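/- For every ε > 0, the ratio (∫_{(𝔞⁺)_{T+ε}} ξ(t) dt) / (∫_{(𝔞⁺)_T} ξ(t) dt) tends to e^{δε} as T → ∞. (Coordinate form of the paper's Lemma 5.4 on the volume growth of Riemannian balls, via the Cartan integration formula.) -/

import Mathlib

open MeasureTheory Real Filter Set

private lemma aux_sinh_le_exp {x : ℝ} (hx : 0 ≤ x) : Real.sinh x ≤ Real.exp x := by
  rw [Real.sinh_eq]
  have h1 : Real.exp (-x) ≥ 0 := (Real.exp_pos _).le
  nlinarith [Real.exp_pos x]

private lemma aux_sinh_shift_lower {x c : ℝ} (hx : 0 ≤ x) (hc : 0 ≤ c) :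
    Real.exp c * Real.sinh x ≤ Real.sinh (x + c) := by
  rw [Real.sinh_add]
  have h1 : Real.sinh x ≤ Real.cosh x := (Real.sinh_lt_cosh x).le
  have h2 : 0 ≤ Real.sinh c := Real.sinh_nonneg_iff.2 hc
  have h3 : Real.exp c = Real.cosh c + Real.sinh c := (Real.cosh_add_sinh c).symm
  have h0 : 0 ≤ Real.sinh x := Real.sinh_nonneg_iff.2 hx
  nlinarith

private lemma aux_sinh_shift_upper {A x c : ℝ} (hA : 0 < A) (hx : A ≤ x) (hc : 0 ≤ c) :
    Real.sinh (x + c) ≤ Real.exp c * ((1 + Real.exp (-A) / Real.sinh A) * Real.sinh x) := by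
  have hsA : 0 < Real.sinh A := Real.sinh_pos_iff.2 hA
  have hsx : Real.sinh A ≤ Real.sinh x := Real.sinh_le_sinh.2 hx
  have h1 : Real.cosh x ≤ (1 + Real.exp (-A) / Real.sinh A) * Real.sinh x := by
    have h2 : Real.cosh x - Real.sinh x = Real.exp (-x) := Real.cosh_sub_sinh x
    have h3 : Real.exp (-x) ≤ Real.exp (-A) := Real.exp_le_exp.2 (by linarith)
    have h4 : Real.exp (-A) / Real.sinh A * Real.sinh A = Real.exp (-A) := by
      field_simp
    nlinarith [div_nonneg (Real.exp_pos (-A)).le hsA.le]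
  have h5 : Real.sinh x ≤ Real.cosh x := (Real.sinh_lt_cosh x).le
  have h6 : 0 ≤ Real.sinh c := Real.sinh_nonneg_iff.2 hc
  have h7 : Real.exp c = Real.cosh c + Real.sinh c := (Real.cosh_add_sinh c).symm
  rw [Real.sinh_add]
  have h8 : 0 < Real.cosh c := Real.cosh_pos c
  have h9 : 0 ≤ Real.sinh x := hsA.le.trans hsx
  nlinarith [Real.cosh_pos x]

private lemma aux_setIntegral_shift {E : Type*} [NormedAddCommGroup E] [MeasurableSpace E]
    [BorelSpace E] {μ : Measure E} [μ.IsAddRightInvariant] (f : E → ℝ) {A : Set E}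
    (hA : MeasurableSet A) (w : E) :
    ∫ t in A, f t ∂μ = ∫ t in (fun x => x + w) ⁻¹' A, f (t + w) ∂μ := by
  have hA' : MeasurableSet ((fun x => x + w) ⁻¹' A) := hA.preimage (measurable_add_const w)
  rw [← integral_indicator hA, ← integral_indicator hA',
    ← MeasureTheory.integral_add_right_eq_self (A.indicator f) w]
  refine integral_congr_ae (Eventually.of_forall fun x => ?_)
  by_cases h : x + w ∈ A <;> simp [Set.indicator, h, Set.mem_preimage]

private lemma aux_tendsto_sandwich {R : ℝ → ℝ} {L : ℝ} {K : ℕ → ℝ}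
    (hK : Tendsto K atTop (nhds L))
    (h1 : ∀ᶠ T in atTop, L ≤ R T)
    (h2 : ∀ n, ∀ᶠ T in atTop, R T ≤ K n) :
    Tendsto R atTop (nhds L) := by
  rw [tendsto_order]
  constructor
  · intro b hb
    filter_upwards [h1] with T h
    exact lt_of_lt_of_le hb h
  · intro b hb
    obtain ⟨n, hn⟩ := (hK.eventually_lt_const hb).exists
    filter_upwards [h2 n] with T h
    exact lt_of_le_of_lt h hn

private lemma aux_poly_exp (r : ℕ) (ε : ℝ) {a : ℝ} (ha : 0 < a) :
    Tendsto (fun T : ℝ => (T + ε) ^ r * Real.exp (-(a * T))) atTop (nhds 0) := by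
  have h0 : Tendsto (fun x : ℝ => x ^ r * Real.exp (-x)) atTop (nhds 0) :=
    tendsto_pow_mul_exp_neg_atTop_nhds_zero r
  have h1 : Tendsto (fun T : ℝ => a * (T + ε)) atTop atTop :=
    (tendsto_atTop_add_const_right _ ε tendsto_id).const_mul_atTop ha
  have h2 : Tendsto (fun T : ℝ => (a * (T + ε)) ^ r * Real.exp (-(a * (T + ε)))) atTop (nhds 0) :=
    h0.comp h1
  have h3 : Tendsto (fun T : ℝ =>
      ((a ^ r)⁻¹ * Real.exp (a * ε)) * ((a * (T + ε)) ^ r * Real.exp (-(a * (T + ε)))))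
      atTop (nhds 0) := by
    simpa using h2.const_mul ((a ^ r)⁻¹ * Real.exp (a * ε))
  convert h3 using 2 with T
  have hne : a ^ r ≠ 0 := pow_ne_zero _ ha.ne'
  have he : Real.exp (-(a * (T + ε))) = Real.exp (-(a * T)) * Real.exp (-(a*ε)) := by
    rw [← Real.exp_add]; ring_nf
  have h4 : Real.exp (a * ε) * Real.exp (-(a * ε)) = 1 := by
    rw [← Real.exp_add]; simp
  calc (T+ε)^r * Real.exp (-(a*T))
      = ((a^r)⁻¹ * a^r) * ((T+ε)^r * Real.exp (-(a*T))) * (Real.exp (a*ε) * Real.exp (-(a*ε))) := by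
        rw [inv_mul_cancel₀ hne, h4]; ring
    _ = ((a ^ r)⁻¹ * Real.exp (a * ε)) * ((a * (T + ε)) ^ r * Real.exp (-(a * (T + ε)))) := by
        rw [he, mul_pow]; ring
open RealInnerProductSpace

set_option maxHeartbeats 4000000 in
theorem ball_volume_growth
    (r : ℕ) (hr : 1 ≤ r)
    (ι : Type) [Fintype ι] [Nonempty ι]
    (α : ι → (EuclideanSpace ℝ (Fin r) →ₗ[ℝ] ℝ))
    (hα : ∀ i, α i ≠ 0)
    (m : ι → ℕ) (hm : ∀ i, 1 ≤ m i)
    (aPos : Set (EuclideanSpace ℝ (Fin r)))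
    (haPos : aPos = {t | ∀ i, 0 ≤ α i t})
    (haPosInt : (interior aPos).Nonempty)
    (ξ : EuclideanSpace ℝ (Fin r) → ℝ)
    (hξ : ∀ t, ξ t = ∏ i, Real.sinh (α i t) ^ m i)
    (δ : ℝ) (v : EuclideanSpace ℝ (Fin r))
    (hv_norm : ‖v‖ ≤ 1)
    (hδ : δ = ∑ i, (m i : ℝ) * α i v)
    (hmax : ∀ t : EuclideanSpace ℝ (Fin r), ‖t‖ ≤ 1 → ∑ i, (m i : ℝ) * α i t ≤ δ)
    (huniq : ∀ t : EuclideanSpace ℝ (Fin r), ‖t‖ ≤ 1 →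
      (∑ i, (m i : ℝ) * α i t) = δ → t = v)
    (hv_int : v ∈ interior aPos)
    (ε : ℝ) (hε : 0 < ε) :
    Tendsto (fun T : ℝ =>
        (∫ t in {t ∈ aPos | ‖t‖ < T + ε}, ξ t) /
          (∫ t in {t ∈ aPos | ‖t‖ < T}, ξ t))
      atTop (nhds (Real.exp (δ * ε))) := by
  classical
  -- continuity of the linear forms and of ξ
  have hαc : ∀ i, Continuous (α i) := fun i => (α i).continuous_of_finiteDimensional
  have hξc : Continuous ξ := by
    rw [show ξ = fun t => ∏ i, Real.sinh (α i t) ^ m i from funext hξ]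
    refine continuous_finset_prod _ fun i _ => ?_
    exact (Real.continuous_sinh.comp (hαc i)).pow _
  -- the linear functional lam = 2ρ
  set lam : EuclideanSpace ℝ (Fin r) → ℝ := fun t => ∑ i, (m i : ℝ) * α i t with hlam
  have hlamc : Continuous lam := by
    refine continuous_finset_sum _ fun i _ => (continuous_const.mul (hαc i))
  have hlam_smul : ∀ (c : ℝ) (t : EuclideanSpace ℝ (Fin r)), lam (c • t) = c * lam t := by
    intro c t
    simp only [hlam, LinearMap.map_smul, smul_eq_mul, Finset.mul_sum]
    congr 1; funext i; ring
  -- aPos is closed and measurable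
  have haPosC : IsClosed aPos := by
    rw [haPos]
    have : {t : EuclideanSpace ℝ (Fin r) | ∀ i, 0 ≤ α i t} = ⋂ i, (α i) ⁻¹' (Ici 0) := by
      ext t; simp [Set.mem_iInter]
    rw [this]
    exact isClosed_iInter fun i => (isClosed_Ici).preimage (hαc i)
  have haPosM : MeasurableSet aPos := haPosC.measurableSet
  -- positivity of α i v
  have hαv : ∀ i, 0 < α i v := by
    intro i
    have hv0 : 0 ≤ α i v := by
      have := interior_subset hv_int
      rw [haPos] at this; exact this i
    rcases hv0.lt_or_eq with h | h
    · exact h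
    · exfalso
      obtain ⟨ρ₀, hρ₀, hball⟩ := Metric.isOpen_iff.1 isOpen_interior v hv_int
      obtain ⟨w, hw⟩ : ∃ w : EuclideanSpace ℝ (Fin r), α i w < 0 := by
        obtain ⟨u, hu⟩ : ∃ u : EuclideanSpace ℝ (Fin r), α i u ≠ 0 := by
          by_contra hcon
          push_neg at hcon
          exact hα i (by ext u; simp [hcon u])
        rcases hu.lt_or_gt with h' | h'
        · exact ⟨u, h'⟩
        · exact ⟨-u, by simpa using neg_neg_iff_pos.2 h'⟩
      have hwn : 0 < ‖w‖ := norm_pos_iff.2 (by intro h0; rw [h0] at hw; simp at hw)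
      have hpos : 0 < ρ₀ / (2 * ‖w‖) := by positivity
      set z := v + (ρ₀ / (2 * ‖w‖)) • w with hz
      have hzball : z ∈ Metric.ball v ρ₀ := by
        rw [Metric.mem_ball, hz]
        have hnrm : ‖(ρ₀ / (2 * ‖w‖)) • w‖ = ρ₀ / 2 := by
          rw [norm_smul, Real.norm_eq_abs, abs_of_pos hpos]
          field_simp
        simp only [dist_eq_norm, add_sub_cancel_left, hnrm]
        linarith
      have hzin : z ∈ aPos := interior_subset (hball hzball)
      rw [haPos] at hzin
      have h2 := hzin i
      rw [hz] at h2
      simp only [map_add, LinearMap.map_smul, smul_eq_mul] at h2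
      rw [← h] at h2
      nlinarith
  -- δ > 0
  have hδpos : 0 < δ := by
    rw [hδ]
    refine Finset.sum_pos (fun i _ => ?_) Finset.univ_nonempty
    have h1 : (1 : ℝ) ≤ (m i : ℝ) := by exact_mod_cast hm i
    nlinarith [hαv i]
  -- ‖v‖ = 1 and ⟪v,v⟫ = 1
  have hv1 : ‖v‖ = 1 := by
    rcases hv_norm.lt_or_eq with h | h
    · exfalso
      have hvne : v ≠ 0 := by
        intro h0
        have := hαv (Classical.arbitrary ι)
        rw [h0] at this; simp at this
      have hnv : 0 < ‖v‖ := norm_pos_iff.2 hvne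
      have hw : ‖(‖v‖⁻¹ • v : EuclideanSpace ℝ (Fin r))‖ ≤ 1 := by
        rw [norm_smul, norm_inv, norm_norm, inv_mul_cancel₀ hnv.ne']
      have h3 := hmax _ hw
      rw [show (∑ i, (m i : ℝ) * α i (‖v‖⁻¹ • v)) = ‖v‖⁻¹ * δ by
        rw [hδ, Finset.mul_sum]
        refine Finset.sum_congr rfl fun i _ => ?_
        simp [LinearMap.map_smul]; ring] at h3
      have h4 : 1 < ‖v‖⁻¹ := (one_lt_inv₀ hnv).2 h
      nlinarith
    · exact h
  have hvv : ⟪v, v⟫ = 1 := by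
    rw [real_inner_self_eq_norm_sq, hv1]; norm_num

  -- M = total multiplicity
  set M : ℕ := ∑ i, m i with hM
  -- the truncated cone S T and basic facts
  set S : ℝ → Set (EuclideanSpace ℝ (Fin r)) := fun T => {t ∈ aPos | ‖t‖ < T} with hSdef
  have hSeq : ∀ T, S T = aPos ∩ Metric.ball 0 T := by
    intro T; ext t; simp [hSdef, Metric.mem_ball, dist_zero_right]
  have hSm : ∀ T, MeasurableSet (S T) := by
    intro T; rw [hSeq]; exact haPosM.inter measurableSet_ball
  have hSsubB : ∀ T, S T ⊆ Metric.closedBall 0 |T| := by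
    intro T t ht
    rw [Metric.mem_closedBall, dist_zero_right]
    exact le_trans ht.2.le (le_abs_self T)
  -- integrability of continuous functions on bounded sets
  have hIntOn : ∀ (f : EuclideanSpace ℝ (Fin r) → ℝ), Continuous f →
      ∀ (s : Set (EuclideanSpace ℝ (Fin r))) (R : ℝ),
      s ⊆ Metric.closedBall 0 R → IntegrableOn f s := by
    intro f hf s R hsub
    exact (hf.continuousOn.integrableOn_compact (isCompact_closedBall _ _)).mono_set hsub
  -- nonnegativity and exponential domination of ξ on the cone
  have hξ0 : ∀ t ∈ aPos, 0 ≤ ξ t := by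
    intro t ht; rw [haPos] at ht; rw [hξ]
    exact Finset.prod_nonneg fun i _ => pow_nonneg (Real.sinh_nonneg_iff.2 (ht i)) _
  have hξexp : ∀ t ∈ aPos, ξ t ≤ Real.exp (lam t) := by
    intro t ht; rw [haPos] at ht
    rw [hξ]
    calc ∏ i, Real.sinh (α i t) ^ m i ≤ ∏ i, Real.exp (α i t) ^ m i := by
          refine Finset.prod_le_prod (fun i _ => pow_nonneg (Real.sinh_nonneg_iff.2 (ht i)) _)
            (fun i _ => pow_le_pow_left₀ (Real.sinh_nonneg_iff.2 (ht i)) (aux_sinh_le_exp (ht i)) _)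
      _ = Real.exp (lam t) := by
          rw [hlam, Real.exp_sum]
          refine Finset.prod_congr rfl fun i _ => ?_
          rw [← Real.exp_nat_mul]
  -- shift lower bound:  e^{δc} ξ(t) ≤ ξ(t + c v)
  have hlow : ∀ c : ℝ, 0 ≤ c → ∀ t ∈ aPos, Real.exp (δ * c) * ξ t ≤ ξ (t + c • v) := by
    intro c hc t ht; rw [haPos] at ht
    rw [hξ t, hξ (t + c • v)]
    have key : Real.exp (δ * c) * ∏ i, Real.sinh (α i t) ^ m i
        = ∏ i, (Real.exp (c * α i v) * Real.sinh (α i t)) ^ m i := by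
      simp only [mul_pow, Finset.prod_mul_distrib]
      congr 1
      rw [show ∏ i, Real.exp (c * α i v) ^ m i = ∏ i, Real.exp ((m i : ℝ) * (c * α i v)) by
        refine Finset.prod_congr rfl fun i _ => ?_; rw [← Real.exp_nat_mul],
        ← Real.exp_sum]
      congr 1
      rw [hδ, Finset.sum_mul]
      refine Finset.sum_congr rfl fun i _ => ?_
      ring
    rw [key]
    refine Finset.prod_le_prod (fun i _ => pow_nonneg (mul_nonneg (Real.exp_pos _).le (Real.sinh_nonneg_iff.2 (ht i))) _) (fun i _ => ?_)
    have hb : 0 ≤ Real.sinh (α i t) := Real.sinh_nonneg_iff.2 (ht i)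
    have hcv : 0 ≤ c * α i v := mul_nonneg hc (hαv i).le
    have := aux_sinh_shift_lower (ht i) hcv
    have harg : α i (t + c • v) = α i t + c * α i v := by
      simp [map_add, LinearMap.map_smul]
    rw [harg]
    exact pow_le_pow_left₀ (by positivity) this _
  -- the volume function F
  set F : ℝ → ℝ := fun T => ∫ t in S T, ξ t with hFdef
  have hFint : ∀ T, IntegrableOn ξ (S T) := fun T => hIntOn ξ hξc _ |T| (hSsubB T)
  -- growth bound:  e^{δ a} F T ≤ F (T + a)
  have hgrow : ∀ a : ℝ, 0 ≤ a → ∀ T : ℝ, Real.exp (δ * a) * F T ≤ F (T + a) := by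
    intro a ha T
    set w : EuclideanSpace ℝ (Fin r) := a • v with hw
    have hwnorm : ‖w‖ = a := by rw [hw, norm_smul, Real.norm_eq_abs, abs_of_nonneg ha, hv1, mul_one]
    have hmemP : ∀ t ∈ S T, t + w ∈ S (T + a) := by
      intro t ht
      obtain ⟨ht1, ht2⟩ := ht
      refine ⟨?_, ?_⟩
      · rw [haPos]; intro i
        rw [haPos] at ht1
        have : α i (t + w) = α i t + a * α i v := by simp [hw, map_add, LinearMap.map_smul]
        rw [this]
        have := hαv i
        have := ht1 i
        nlinarith
      · calc ‖t + w‖ ≤ ‖t‖ + ‖w‖ := norm_add_le _ _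
          _ < T + a := by rw [hwnorm]; linarith
    have htrans := aux_setIntegral_shift (μ := volume) ξ (hSm (T + a)) w
    have hPm : MeasurableSet ((fun x => x + w) ⁻¹' S (T + a)) :=
      (hSm (T + a)).preimage (measurable_add_const w)
    have hPsub : (fun x => x + w) ⁻¹' S (T + a) ⊆ Metric.closedBall 0 (|T + a| + a) := by
      intro x hx
      rw [Set.mem_preimage] at hx
      rw [Metric.mem_closedBall, dist_zero_right]
      have h1 : ‖x + w‖ ≤ |T + a| := by
        have := hSsubB (T + a) hx
        rwa [Metric.mem_closedBall, dist_zero_right] at this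
      calc ‖x‖ = ‖(x + w) - w‖ := by rw [add_sub_cancel_right]
        _ ≤ ‖x + w‖ + ‖w‖ := norm_sub_le _ _
        _ ≤ |T + a| + a := by rw [hwnorm]; linarith
    have hIntShift : IntegrableOn (fun t => ξ (t + w)) ((fun x => x + w) ⁻¹' S (T + a)) :=
      hIntOn _ (hξc.comp (continuous_id.add continuous_const)) _ _ hPsub
    have hsub2 : S T ⊆ (fun x => x + w) ⁻¹' S (T + a) := fun t ht => hmemP t ht
    calc Real.exp (δ * a) * F T = ∫ t in S T, Real.exp (δ * a) * ξ t := by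
          rw [hFdef, MeasureTheory.integral_const_mul]
      _ ≤ ∫ t in S T, ξ (t + w) := by
          refine setIntegral_mono_on ((hFint T).const_mul _)
            (hIntShift.mono_set hsub2) (hSm T) (fun t ht => hlow a ha t ht.1)
      _ ≤ ∫ t in (fun x => x + w) ⁻¹' S (T + a), ξ (t + w) := by
          refine setIntegral_mono_set hIntShift ?_ hsub2.eventuallyLE
          refine (ae_restrict_iff' hPm).2 (Eventually.of_forall fun x hx => ?_)
          exact hξ0 _ (hx.1)
      _ = F (T + a) := htrans.symm
  -- a radius where F is positive
  have hT0 : ∃ T₀ : ℝ, 0 < F T₀ ∧ 0 < T₀ := by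
    have hξv : 0 < ξ v := by
      rw [hξ]
      exact Finset.prod_pos fun i _ => pow_pos (Real.sinh_pos_iff.2 (hαv i)) _
    have hU : IsOpen (interior aPos ∩ ξ ⁻¹' (Ioi (ξ v / 2))) :=
      isOpen_interior.inter (isOpen_Ioi.preimage hξc)
    have hvU : v ∈ interior aPos ∩ ξ ⁻¹' (Ioi (ξ v / 2)) :=
      ⟨hv_int, by simp [Set.mem_preimage]; linarith⟩
    obtain ⟨ρ₁, hρ₁, hball₁⟩ := Metric.isOpen_iff.1 hU v hvU
    refine ⟨‖v‖ + ρ₁, ?_, by rw [hv1]; linarith⟩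
    have hbsub : Metric.ball v (ρ₁ / 2) ⊆ S (‖v‖ + ρ₁) := by
      intro t ht
      have ht' : t ∈ interior aPos ∩ ξ ⁻¹' (Ioi (ξ v / 2)) :=
        hball₁ (Metric.ball_subset_ball (by linarith) ht)
      refine ⟨interior_subset ht'.1, ?_⟩
      have : dist t v < ρ₁ / 2 := ht
      calc ‖t‖ = ‖v + (t - v)‖ := by congr 1; abel
        _ ≤ ‖v‖ + ‖t - v‖ := norm_add_le _ _
        _ < ‖v‖ + ρ₁ := by
            have : ‖t - v‖ < ρ₁ / 2 := by rwa [← dist_eq_norm]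
            linarith
    have hlb : ξ v / 2 * (volume (Metric.ball v (ρ₁ / 2))).toReal
        ≤ ∫ t in Metric.ball v (ρ₁ / 2), ξ t := by
      refine setIntegral_ge_of_const_le_real measurableSet_ball measure_ball_lt_top.ne
        (fun x hx => ?_) (hIntOn ξ hξc _ (‖v‖ + ρ₁ / 2) ?_)
      · have hx' := hball₁ (Metric.ball_subset_ball (by linarith) hx)
        exact (hx'.2 : ξ x ∈ Ioi (ξ v / 2)).le
      · intro x hx
        rw [Metric.mem_closedBall, dist_zero_right]
        have : ‖x - v‖ < ρ₁ / 2 := by rwa [← dist_eq_norm]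
        calc ‖x‖ = ‖v + (x - v)‖ := by congr 1; abel
          _ ≤ ‖v‖ + ‖x - v‖ := norm_add_le _ _
          _ ≤ ‖v‖ + ρ₁ / 2 := by linarith
    have hvol : 0 < (volume (Metric.ball v (ρ₁ / 2))).toReal :=
      ENNReal.toReal_pos (Metric.measure_ball_pos volume v (by linarith)).ne' measure_ball_lt_top.ne
    have hmono : ∫ t in Metric.ball v (ρ₁ / 2), ξ t ≤ F (‖v‖ + ρ₁) := by
      refine setIntegral_mono_set (hFint _) ?_ hbsub.eventuallyLE
      refine (ae_restrict_iff' (hSm _)).2 (Eventually.of_forall fun x hx => ?_)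
      exact hξ0 _ hx.1
    have : 0 < ξ v / 2 * (volume (Metric.ball v (ρ₁ / 2))).toReal := by positivity
    linarith
  obtain ⟨T₀, hFT₀, hT₀pos⟩ := hT0
  set c₁ : ℝ := F T₀ * Real.exp (-(δ * T₀)) with hc₁def
  have hc₁ : 0 < c₁ := by positivity
  have hFlb : ∀ T, T₀ ≤ T → c₁ * Real.exp (δ * T) ≤ F T := by
    intro T hT
    have h2 := hgrow (T - T₀) (by linarith) T₀
    rw [show T₀ + (T - T₀) = T by ring] at h2
    have h3 : c₁ * Real.exp (δ * T) = Real.exp (δ * (T - T₀)) * F T₀ := by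
      rw [hc₁def, mul_assoc, ← Real.exp_add]
      have harg : -(δ * T₀) + δ * T = δ * (T - T₀) := by ring
      rw [harg, mul_comm]
    linarith
  have hFpos : ∀ T, T₀ ≤ T → 0 < F T := fun T hT =>
    lt_of_lt_of_le (by positivity) (hFlb T hT)
  -- eventual lower bound for the ratio
  have h1 : ∀ᶠ T in atTop, Real.exp (δ * ε) ≤ F (T + ε) / F T := by
    filter_upwards [eventually_ge_atTop T₀] with T hT
    rw [le_div_iff₀ (hFpos T hT)]
    exact hgrow ε hε.le T

  -- bound B on the values α i v
  set B : ℝ := ∑ i, α i v with hBdef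
  have hB : ∀ i, α i v ≤ B := by
    intro i
    rw [hBdef]
    exact Finset.single_le_sum (fun j _ => (hαv j).le) (Finset.mem_univ i)
  -- the shift upper bound, valid deep inside the cone
  have harg : ∀ (c : ℝ) (s : EuclideanSpace ℝ (Fin r)) i,
      α i (s + c • v) = α i s + c * α i v := by
    intro c s i; simp [map_add, LinearMap.map_smul]
  have hup : ∀ (A' c : ℝ), 0 < A' → 0 ≤ c → ∀ s : EuclideanSpace ℝ (Fin r),
      (∀ i, A' ≤ α i s) →
      ξ (s + c • v) ≤ Real.exp (δ * c) * (1 + Real.exp (-A') / Real.sinh A') ^ M * ξ s := by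
    intro A' c hA' hc s hs
    have hs0 : ∀ i, 0 ≤ α i s := fun i => le_trans hA'.le (hs i)
    rw [hξ s, hξ (s + c • v)]
    set g := Real.exp (-A') / Real.sinh A' with hgdef
    have hg0 : 0 ≤ g := div_nonneg (Real.exp_pos _).le (Real.sinh_pos_iff.2 hA').le
    have key : Real.exp (δ * c) * (1 + g) ^ M * ∏ i, Real.sinh (α i s) ^ m i
        = ∏ i, (Real.exp (c * α i v) * ((1 + g) * Real.sinh (α i s))) ^ m i := by
      simp only [mul_pow, Finset.prod_mul_distrib]
      rw [Finset.prod_pow_eq_pow_sum]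
      rw [show ∏ i, Real.exp (c * α i v) ^ m i = ∏ i, Real.exp ((m i : ℝ) * (c * α i v)) by
        refine Finset.prod_congr rfl fun i _ => ?_; rw [← Real.exp_nat_mul], ← Real.exp_sum]
      rw [show (∑ i, (m i : ℝ) * (c * α i v)) = δ * c by
        rw [hδ, Finset.sum_mul]; refine Finset.sum_congr rfl fun i _ => ?_; ring]
      rw [hM]
      ring
    rw [key]
    refine Finset.prod_le_prod (fun i _ => pow_nonneg (Real.sinh_nonneg_iff.2 (by
        rw [harg c s i]
        have h1 := hs0 i
        have h2 : 0 ≤ c * α i v := mul_nonneg hc (hαv i).le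
        linarith)) _) (fun i _ => ?_)
    rw [harg c s i]
    have hb0 : 0 ≤ Real.sinh (α i s + c * α i v) := Real.sinh_nonneg_iff.2 (by
      have h1 := hs0 i
      have h2 : 0 ≤ c * α i v := mul_nonneg hc (hαv i).le
      linarith)
    exact pow_le_pow_left₀ hb0
      (aux_sinh_shift_upper hA' (hs i) (mul_nonneg hc (hαv i).le)) _
  -- volume of balls
  haveI : Nonempty (Fin r) := ⟨⟨0, hr⟩⟩
  set v₀ : ℝ := (volume (Metric.ball (0 : EuclideanSpace ℝ (Fin r)) 1)).toReal with hv₀def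
  have hv₀pos : 0 < v₀ :=
    ENNReal.toReal_pos (Metric.measure_ball_pos _ _ one_pos).ne' measure_ball_lt_top.ne
  have hvol : ∀ R : ℝ, 0 ≤ R →
      (volume (Metric.ball (0 : EuclideanSpace ℝ (Fin r)) R)).toReal = R ^ r * v₀ := by
    intro R hR
    rw [Measure.addHaar_ball _ _ hR, ENNReal.toReal_mul, ENNReal.toReal_ofReal (by positivity),
      show (Module.finrank ℝ (EuclideanSpace ℝ (Fin r))) = r from finrank_euclideanSpace_fin]

  -- the comparison sequence
  set Kseq : ℕ → ℝ := fun n =>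
    Real.exp (δ * (ε + ε / (n + 1))) *
      (1 + Real.exp (-((n : ℝ) + 1)) / Real.sinh ((n : ℝ) + 1)) ^ M + ε / (n + 1)
    with hKseqdef
  have hθlim : Tendsto (fun n : ℕ => ε / ((n : ℝ) + 1)) atTop (nhds 0) := by
    have := tendsto_one_div_add_atTop_nhds_zero_nat.const_mul ε
    simpa [div_eq_mul_inv, mul_comm] using this
  have hglim : Tendsto (fun n : ℕ => Real.exp (-((n : ℝ) + 1)) / Real.sinh ((n : ℝ) + 1))
      atTop (nhds 0) := by
    have hnat : Tendsto (fun n : ℕ => (n : ℝ) + 1) atTop atTop :=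
      tendsto_atTop_add_const_right _ 1 tendsto_natCast_atTop_atTop
    have hexp : Tendsto (fun n : ℕ => Real.exp (-((n : ℝ) + 1))) atTop (nhds 0) :=
      Real.tendsto_exp_neg_atTop_nhds_zero.comp hnat
    refine squeeze_zero (g := fun n : ℕ => Real.exp (-((n : ℝ) + 1)) * (Real.sinh 1)⁻¹)
      (fun n => ?_) (fun n => ?_) ?_
    · positivity
    · show Real.exp (-((n : ℝ) + 1)) / Real.sinh ((n : ℝ) + 1)
        ≤ Real.exp (-((n : ℝ) + 1)) * (Real.sinh 1)⁻¹
      rw [div_eq_mul_inv]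
      refine mul_le_mul_of_nonneg_left ?_ (Real.exp_pos _).le
      refine inv_anti₀ (Real.sinh_pos_iff.2 one_pos) ?_
      exact Real.sinh_le_sinh.2 (by exact_mod_cast le_add_of_nonneg_left (Nat.cast_nonneg n))
    · simpa using hexp.mul_const (Real.sinh 1)⁻¹
  have hKlim : Tendsto Kseq atTop (nhds (Real.exp (δ * ε))) := by
    have h1 : Tendsto (fun n : ℕ => Real.exp (δ * (ε + ε / (n + 1)))) atTop
        (nhds (Real.exp (δ * ε))) := by
      have : Tendsto (fun n : ℕ => δ * (ε + ε / ((n : ℝ) + 1))) atTop (nhds (δ * ε)) := by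
        have h0 : Tendsto (fun n : ℕ => ε + ε / ((n : ℝ) + 1)) atTop (nhds (ε + 0)) :=
          (tendsto_const_nhds (x := ε)).add hθlim
        have h0' := h0.const_mul δ
        simpa using h0'
      exact (Real.continuous_exp.tendsto _).comp this
    have h2 : Tendsto (fun n : ℕ =>
        (1 + Real.exp (-((n : ℝ) + 1)) / Real.sinh ((n : ℝ) + 1)) ^ M) atTop (nhds 1) := by
      have h0 : Tendsto (fun n : ℕ =>
          1 + Real.exp (-((n : ℝ) + 1)) / Real.sinh ((n : ℝ) + 1)) atTop (nhds (1 + 0)) :=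
        (tendsto_const_nhds (x := (1 : ℝ))).add hglim
      have h0' := h0.pow M
      simpa using h0'
    have h3 := (h1.mul h2).add hθlim
    rw [hKseqdef, show Real.exp (δ * ε) = Real.exp (δ * ε) * 1 + 0 by ring]
    exact h3

  -- the eventual upper bound for each n
  have h2 : ∀ n : ℕ, ∀ᶠ T in atTop, F (T + ε) / F T ≤ Kseq n := by
    intro n
    set θ : ℝ := ε / ((n : ℝ) + 1) with hθdef
    have hθ : 0 < θ := by positivity
    set c : ℝ := ε + θ with hcdef
    have hc : 0 < c := by positivity
    have hcε : ε < c := by rw [hcdef]; linarith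
    set κ : ℝ := (ε + θ / 2) / c with hκdef
    have hκpos : 0 < κ := by positivity
    have hκ1 : κ < 1 := by rw [hκdef, div_lt_one hc]; linarith
    have hκc : c * κ = ε + θ / 2 := by rw [hκdef]; field_simp
    set A' : ℝ := (n : ℝ) + 1 with hA'def
    have hA' : 0 < A' := by positivity
    have hBpos : 0 < B := by
      rw [hBdef]; exact Finset.sum_pos (fun i _ => hαv i) Finset.univ_nonempty
    set A : ℝ := A' + c * B with hAdef
    have hApos : 0 < A := by
      have h0 := mul_pos hc hBpos
      rw [hAdef]
      linarith only [hA', h0]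
    set gq : ℝ := Real.exp (-A') / Real.sinh A' with hgqdef
    have hgq0 : 0 ≤ gq :=
      div_nonneg (Real.exp_pos _).le (Real.sinh_pos_iff.2 hA').le
    set K : ℝ := Real.exp (δ * c) * (1 + gq) ^ M with hKdef
    have hK0 : 0 ≤ K := by positivity
    -- the direction gap σ₀
    set σ₀ : ℝ := (Finset.univ.inf' Finset.univ_nonempty fun i => α i v) / 2 with hσ₀def
    have hinfpos : 0 < Finset.univ.inf' Finset.univ_nonempty fun i => α i v :=
      (Finset.lt_inf'_iff _).2 fun i _ => hαv i
    have hσ₀pos : 0 < σ₀ := by rw [hσ₀def]; linarith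
    have hσ₀lt : ∀ i, σ₀ < α i v := by
      intro i
      have h5 : (Finset.univ.inf' Finset.univ_nonempty fun i => α i v) ≤ α i v :=
        Finset.inf'_le _ (Finset.mem_univ i)
      rw [hσ₀def]; linarith
    -- the compact set of bad directions and its spectral gap
    set S₀ : Set (EuclideanSpace ℝ (Fin r)) := {u | ‖u‖ = 1 ∧ (∀ i, 0 ≤ α i u) ∧
      ((∃ i, α i u ≤ σ₀) ∨ ⟪u, v⟫ ≤ κ)} with hS₀def
    have hS₀closed : IsClosed S₀ := by
      have : S₀ = {u : EuclideanSpace ℝ (Fin r) | ‖u‖ = 1} ∩ ((⋂ i, {u | 0 ≤ α i u}) ∩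
          ((⋃ i, {u | α i u ≤ σ₀}) ∪ {u | ⟪u, v⟫ ≤ κ})) := by
        ext u
        simp only [hS₀def, Set.mem_setOf_eq, Set.mem_inter_iff, Set.mem_iInter,
          Set.mem_iUnion, Set.mem_union]
      rw [this]
      refine (isClosed_eq continuous_norm continuous_const).inter (IsClosed.inter ?_ ?_)
      · exact isClosed_iInter fun i => isClosed_le continuous_const (hαc i)
      · refine IsClosed.union ?_ ?_
        · exact isClosed_iUnion_of_finite fun i => isClosed_le (hαc i) continuous_const
        · exact isClosed_le (continuous_id.inner continuous_const) continuous_const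
    have hS₀cpt : IsCompact S₀ := by
      refine (isCompact_sphere (0 : EuclideanSpace ℝ (Fin r)) 1).of_isClosed_subset hS₀closed ?_
      intro u hu
      rw [mem_sphere_zero_iff_norm]
      exact hu.1
    have hβex : ∃ β : ℝ, 0 ≤ β ∧ β < δ ∧ ∀ u ∈ S₀, lam u ≤ β := by
      rcases S₀.eq_empty_or_nonempty with hemp | hne
      · exact ⟨0, le_refl 0, hδpos, fun u hu => by rw [hemp] at hu; exact absurd hu (Set.notMem_empty u)⟩
      · obtain ⟨u₀, hu₀S, hu₀max⟩ := hS₀cpt.exists_isMaxOn hne hlamc.continuousOn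
        have hu₀n : ‖u₀‖ ≤ 1 := le_of_eq hu₀S.1
        have hu₀lt : lam u₀ < δ := by
          rcases (hmax u₀ hu₀n).lt_or_eq with h4 | h4
          · exact h4
          · exfalso
            have := huniq u₀ hu₀n h4
            rw [this] at hu₀S
            rcases hu₀S.2.2 with ⟨i, hi⟩ | hi
            · exact absurd hi (not_le.2 (hσ₀lt i))
            · rw [hvv] at hi; linarith
        refine ⟨max (lam u₀) 0, le_max_right _ _, max_lt hu₀lt hδpos, fun u hu => ?_⟩
        exact le_max_of_le_left (hu₀max hu)
    obtain ⟨β, hβ0, hβδ, hβS⟩ := hβex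
    -- the radius R₄
    set R₄ : ℝ := max (max (max ε ((c ^ 2 - ε ^ 2) / (θ / 2))) (A / σ₀)) 1 with hR₄def
    have hR₄1 : (1 : ℝ) ≤ R₄ := le_max_right _ _
    have hR₄ε : ε ≤ R₄ :=
      le_trans (le_trans (le_max_left _ _) (le_max_left _ _)) (le_max_left _ _)
    have hR₄R2 : (c ^ 2 - ε ^ 2) / (θ / 2) ≤ R₄ :=
      le_trans (le_trans (le_max_right _ _) (le_max_left _ _)) (le_max_left _ _)
    have hR₄A : A / σ₀ ≤ R₄ := le_trans (le_max_right _ _) (le_max_left _ _)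
    have hR₄pos : 0 < R₄ := lt_of_lt_of_le one_pos hR₄1
    -- the bound C₁ on ξ over the ball of radius R₄
    obtain ⟨x₀, hx₀mem, hx₀max⟩ :=
      (isCompact_closedBall (0 : EuclideanSpace ℝ (Fin r)) R₄).exists_isMaxOn
        ⟨0, by simp [Metric.mem_closedBall]; linarith⟩ hξc.continuousOn
    set C₁ : ℝ := max (ξ x₀) 0 with hC₁def
    have hC₁0 : 0 ≤ C₁ := le_max_right _ _
    have hC₁ : ∀ t : EuclideanSpace ℝ (Fin r), ‖t‖ ≤ R₄ → ξ t ≤ C₁ := by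
      intro t ht
      refine le_trans (hx₀max ?_) (le_max_left _ _)
      rw [Metric.mem_closedBall, dist_zero_right]
      exact ht
    -- the good region
    set Good : ℝ → Set (EuclideanSpace ℝ (Fin r)) := fun T =>
      {t | t ∈ aPos ∧ ‖t‖ < T + ε ∧ R₄ ≤ ‖t‖ ∧ (∀ i, A ≤ α i t) ∧ κ * ‖t‖ ≤ ⟪t, v⟫}
      with hGooddef
    have hGoodM : ∀ T, MeasurableSet (Good T) := by
      intro T
      have hGeq : Good T = aPos ∩ Metric.ball 0 (T + ε) ∩ {t | R₄ ≤ ‖t‖} ∩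
          (⋂ i, {t | A ≤ α i t}) ∩ {t | κ * ‖t‖ ≤ ⟪t, v⟫} := by
        ext t
        simp [hGooddef, Metric.mem_ball, dist_zero_right, Set.mem_iInter]
        tauto
      rw [hGeq]
      refine (((haPosM.inter measurableSet_ball).inter
        (isClosed_le continuous_const continuous_norm).measurableSet).inter
        (isClosed_iInter fun i => isClosed_le continuous_const (hαc i)).measurableSet).inter
        (isClosed_le (continuous_const.mul continuous_norm)
          (continuous_id.inner continuous_const)).measurableSet
    -- shifting the good region back into S T
    have hGoodShift : ∀ (T : ℝ) (s : EuclideanSpace ℝ (Fin r)), s + c • v ∈ Good T →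
        (s ∈ S T ∧ ∀ i, A' ≤ α i s) := by
      intro T s hs
      obtain ⟨hs1, hs2, hs3, hs4, hs5⟩ := hs
      have hαs : ∀ i, A' ≤ α i s := by
        intro i
        have h4 := hs4 i
        rw [harg c s i] at h4
        have h5 : c * α i v ≤ c * B := mul_le_mul_of_nonneg_left (hB i) hc.le
        rw [hAdef] at h4
        linarith
      have hnormsq : ‖s‖ ^ 2 = ‖s + c • v‖ ^ 2 - 2 * (c * ⟪s + c • v, v⟫) + c ^ 2 := by
        have h4 : s = (s + c • v) - c • v := by abel
        nth_rewrite 1 [h4]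
        rw [norm_sub_sq_real, real_inner_smul_right, norm_smul, hv1, Real.norm_eq_abs,
          abs_of_pos hc]
        ring
      have hc2 : ε ≤ ‖s + c • v‖ := le_trans hR₄ε hs3
      have hR2 : (c ^ 2 - ε ^ 2) / (θ / 2) ≤ ‖s + c • v‖ := le_trans hR₄R2 hs3
      have h8 : c ^ 2 - ε ^ 2 ≤ ‖s + c • v‖ * (θ / 2) := by
        rw [div_le_iff₀ (by positivity)] at hR2
        linarith
      have h9 : c * (κ * ‖s + c • v‖) ≤ c * ⟪s + c • v, v⟫ :=
        mul_le_mul_of_nonneg_left hs5 hc.le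
      have hκ' : c * (κ * ‖s + c • v‖) = (ε + θ / 2) * ‖s + c • v‖ := by
        rw [← mul_assoc, hκc]
      have hexp2 : (‖s + c • v‖ - ε) ^ 2 = ‖s + c • v‖ ^ 2 - 2 * ε * ‖s + c • v‖ + ε ^ 2 := by
        ring
      have h9' : (ε + θ / 2) * ‖s + c • v‖ ≤ c * ⟪s + c • v, v⟫ := hκ' ▸ h9
      have hθX : 0 ≤ θ * ‖s + c • v‖ := mul_nonneg hθ.le (norm_nonneg _)
      have hkey : ‖s‖ ^ 2 ≤ (‖s + c • v‖ - ε) ^ 2 := by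
        rw [hexp2, hnormsq]
        clear_value c θ
        linarith only [h9', h8, hθX]
      have hsle : ‖s‖ ≤ ‖s + c • v‖ - ε := by
        by_contra hlt
        push_neg at hlt
        have h10 := mul_self_lt_mul_self (by linarith only [hc2] : (0:ℝ) ≤ ‖s + c • v‖ - ε) hlt
        rw [pow_two, pow_two] at hkey
        linarith only [hkey, h10]
      refine ⟨⟨?_, ?_⟩, hαs⟩
      · rw [haPos]; intro i; linarith only [hαs i, hA']
      · linarith only [hsle, hs2]
    -- the good region integral bound
    have hGoodInt : ∀ T : ℝ, (∫ t in Good T, ξ t) ≤ K * F T := by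
      intro T
      have htrans := aux_setIntegral_shift (μ := volume) ξ (hGoodM T) (c • v)
      set P := (fun x => x + c • v) ⁻¹' Good T with hPdef
      have hPm : MeasurableSet P := (hGoodM T).preimage (measurable_add_const _)
      have hPsub : P ⊆ S T := fun s hs => (hGoodShift T s hs).1
      have hPball : P ⊆ Metric.closedBall 0 |T| := fun s hs => hSsubB T (hPsub hs)
      have hint1 : IntegrableOn (fun s => ξ (s + c • v)) P :=
        hIntOn _ (hξc.comp (continuous_id.add continuous_const)) _ _ hPball
      have hint2 : IntegrableOn ξ P := (hFint T).mono_set hPsub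
      rw [htrans]
      calc (∫ s in P, ξ (s + c • v)) ≤ ∫ s in P, K * ξ s := by
            refine setIntegral_mono_on hint1 (hint2.const_mul K) hPm (fun s hs => ?_)
            exact hup A' c hA' hc.le s (hGoodShift T s hs).2
        _ = K * ∫ s in P, ξ s := by rw [MeasureTheory.integral_const_mul]
        _ ≤ K * F T := by
            refine mul_le_mul_of_nonneg_left ?_ hK0
            refine setIntegral_mono_set (hFint T) ?_ hPsub.eventuallyLE
            exact (ae_restrict_iff' (hSm T)).2 (Eventually.of_forall fun x hx => hξ0 _ hx.1)
    -- pointwise bound on the remainder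
    have hRest : ∀ T : ℝ, 0 ≤ T → ∀ t, t ∈ S (T + ε) \ Good T →
        ξ t ≤ C₁ + Real.exp (β * (T + ε)) := by
      intro T hT t ht
      obtain ⟨⟨ht1, ht2⟩, htn⟩ := ht
      have ht1' : ∀ i, 0 ≤ α i t := by rw [haPos] at ht1; exact ht1
      by_cases hcase : ‖t‖ ≤ R₄
      · exact le_trans (hC₁ t hcase) (le_add_of_nonneg_right (Real.exp_pos _).le)
      · push_neg at hcase
        have htpos : 0 < ‖t‖ := lt_trans hR₄pos hcase
        have hbad : ¬((∀ i, A ≤ α i t) ∧ κ * ‖t‖ ≤ ⟪t, v⟫) := by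
          rintro ⟨ha, hb⟩
          exact htn ⟨ht1, ht2, hcase.le, ha, hb⟩
        set u := ‖t‖⁻¹ • t with hudef
        have hu1 : ‖u‖ = 1 := by
          rw [hudef, norm_smul, norm_inv, norm_norm, inv_mul_cancel₀ htpos.ne']
        have huα : ∀ i, α i u = ‖t‖⁻¹ * α i t := by
          intro i; rw [hudef]; simp [LinearMap.map_smul]
        have huin : u ∈ S₀ := by
          refine ⟨hu1, fun i => ?_, ?_⟩
          · rw [huα i]
            exact mul_nonneg (inv_nonneg.2 htpos.le) (ht1' i)
          · rcases not_and_or.1 hbad with h4 | h4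
            · left
              push_neg at h4
              obtain ⟨i, hi⟩ := h4
              refine ⟨i, ?_⟩
              rw [huα i]
              have h5 : A / σ₀ ≤ ‖t‖ := le_trans hR₄A hcase.le
              have h6 : A ≤ σ₀ * ‖t‖ := by
                rw [div_le_iff₀ hσ₀pos] at h5; linarith only [h5]
              have h7 : α i t ≤ σ₀ * ‖t‖ := by linarith only [hi, h6]
              calc ‖t‖⁻¹ * α i t ≤ ‖t‖⁻¹ * (σ₀ * ‖t‖) :=
                    mul_le_mul_of_nonneg_left h7 (inv_nonneg.2 htpos.le)
                _ = σ₀ := by field_simp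
            · right
              push_neg at h4
              have h5 : ⟪u, v⟫ = ‖t‖⁻¹ * ⟪t, v⟫ := by rw [hudef, real_inner_smul_left]
              rw [h5]
              calc ‖t‖⁻¹ * ⟪t, v⟫ ≤ ‖t‖⁻¹ * (κ * ‖t‖) :=
                    mul_le_mul_of_nonneg_left h4.le (inv_nonneg.2 htpos.le)
                _ = κ := by field_simp
        have hlamu : lam u ≤ β := hβS u huin
        have hlamt : lam t ≤ β * ‖t‖ := by
          have h5 : t = ‖t‖ • u := by rw [hudef, smul_inv_smul₀ htpos.ne']
          calc lam t = lam (‖t‖ • u) := by rw [← h5]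
            _ = ‖t‖ * lam u := hlam_smul _ _
            _ ≤ ‖t‖ * β := mul_le_mul_of_nonneg_left hlamu (norm_nonneg t)
            _ = β * ‖t‖ := mul_comm _ _
        calc ξ t ≤ Real.exp (lam t) := hξexp t ht1
          _ ≤ Real.exp (β * (T + ε)) := by
              refine Real.exp_le_exp.2 ?_
              have h10 : β * ‖t‖ ≤ β * (T + ε) := mul_le_mul_of_nonneg_left ht2.le hβ0
              linarith only [hlamt, h10]
          _ ≤ C₁ + Real.exp (β * (T + ε)) := le_add_of_nonneg_left hC₁0
    -- the splitting inequality
    have hSplit : ∀ T : ℝ, 0 ≤ T →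
        F (T + ε) ≤ K * F T + (C₁ + Real.exp (β * (T + ε))) * ((T + ε) ^ r * v₀) := by
      intro T hT
      have hGsub : Good T ⊆ S (T + ε) := fun t ht => ⟨ht.1, ht.2.1⟩
      have hdm : MeasurableSet (S (T + ε) \ Good T) := (hSm _).diff (hGoodM T)
      have hdisj : Disjoint (Good T) (S (T + ε) \ Good T) := Set.disjoint_sdiff_right
      have hint1 : IntegrableOn ξ (Good T) := (hFint (T + ε)).mono_set hGsub
      have hint2 : IntegrableOn ξ (S (T + ε) \ Good T) :=
        (hFint (T + ε)).mono_set Set.diff_subset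
      have hFsplit : F (T + ε) = (∫ t in Good T, ξ t) + ∫ t in S (T + ε) \ Good T, ξ t := by
        rw [hFdef]
        dsimp only
        rw [← setIntegral_union hdisj hdm hint1 hint2, Set.union_diff_cancel hGsub]
      have hsubball : S (T + ε) \ Good T ⊆ Metric.ball 0 (T + ε) := by
        intro x hx
        have h4 := hx.1
        rw [hSeq] at h4
        exact h4.2
      have hμfin : volume (S (T + ε) \ Good T) < ⊤ :=
        lt_of_le_of_lt (measure_mono hsubball) measure_ball_lt_top
      have hCb : ∀ x ∈ S (T + ε) \ Good T, ‖ξ x‖ ≤ C₁ + Real.exp (β * (T + ε)) := by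
        intro x hx
        rw [Real.norm_eq_abs, abs_of_nonneg (hξ0 _ hx.1.1)]
        exact hRest T hT x hx
      have hnormb := MeasureTheory.norm_setIntegral_le_of_norm_le_const hμfin hCb
      have h6 : (volume (S (T + ε) \ Good T)).toReal ≤ (T + ε) ^ r * v₀ := by
        rw [← hvol (T + ε) (by linarith)]
        exact ENNReal.toReal_mono measure_ball_lt_top.ne (measure_mono hsubball)
      have h7 : (∫ t in S (T + ε) \ Good T, ξ t)
          ≤ (C₁ + Real.exp (β * (T + ε))) * ((T + ε) ^ r * v₀) := by
        calc (∫ t in S (T + ε) \ Good T, ξ t) ≤ ‖∫ t in S (T + ε) \ Good T, ξ t‖ :=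
              le_abs_self _
          _ ≤ (C₁ + Real.exp (β * (T + ε))) * (volume (S (T + ε) \ Good T)).toReal := hnormb
          _ ≤ (C₁ + Real.exp (β * (T + ε))) * ((T + ε) ^ r * v₀) := by
              refine mul_le_mul_of_nonneg_left h6 ?_
              positivity
      linarith only [hGoodInt T, hFsplit, h7]
    -- the error term is eventually small
    have herrlim : Tendsto (fun T : ℝ =>
        ((C₁ + Real.exp (β * (T + ε))) * ((T + ε) ^ r * v₀)) / (c₁ * Real.exp (δ * T)))
        atTop (nhds 0) := by
      have e1 := aux_poly_exp r ε hδpos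
      have e2 := aux_poly_exp r ε (show 0 < δ - β by linarith)
      have h5 := (e1.const_mul (C₁ * v₀ / c₁)).add (e2.const_mul (v₀ * Real.exp (β * ε) / c₁))
      simp only [mul_zero, add_zero] at h5
      have heq : (fun T : ℝ =>
          ((C₁ + Real.exp (β * (T + ε))) * ((T + ε) ^ r * v₀)) / (c₁ * Real.exp (δ * T)))
          = fun T : ℝ => C₁ * v₀ / c₁ * ((T + ε) ^ r * Real.exp (-(δ * T)))
            + v₀ * Real.exp (β * ε) / c₁ * ((T + ε) ^ r * Real.exp (-((δ - β) * T))) := by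
        funext T
        have hβT : Real.exp (β * (T + ε)) = Real.exp (β * T) * Real.exp (β * ε) := by
          rw [← Real.exp_add]; congr 1; ring
        have hδT : Real.exp (-(δ * T)) = (Real.exp (δ * T))⁻¹ := Real.exp_neg _
        have hdbT : Real.exp (-((δ - β) * T)) = Real.exp (β * T) * (Real.exp (δ * T))⁻¹ := by
          rw [← Real.exp_neg (δ * T), ← Real.exp_add]; congr 1; ring
        rw [hβT, hδT, hdbT]
        have hne : Real.exp (δ * T) ≠ 0 := (Real.exp_pos _).ne'
        field_simp
      rw [heq]
      exact h5
    have heverr : ∀ᶠ T in atTop,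
        (C₁ + Real.exp (β * (T + ε))) * ((T + ε) ^ r * v₀) ≤ θ * (c₁ * Real.exp (δ * T)) := by
      filter_upwards [herrlim.eventually_lt_const hθ] with T hTa
      have hden : 0 < c₁ * Real.exp (δ * T) := by positivity
      rw [div_lt_iff₀ hden] at hTa
      linarith
    -- conclusion
    filter_upwards [eventually_ge_atTop T₀, eventually_ge_atTop (0 : ℝ), heverr]
      with T hT hT0 herr
    have hFposT := hFpos T hT
    rw [div_le_iff₀ hFposT]
    have h6 := hSplit T hT0
    have h7 : θ * (c₁ * Real.exp (δ * T)) ≤ θ * F T :=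
      mul_le_mul_of_nonneg_left (hFlb T hT) hθ.le
    have h8 : Kseq n = K + θ := rfl
    rw [h8]
    have h9 : (K + θ) * F T = K * F T + θ * F T := by ring
    linarith only [h6, herr, h7, h9]
  exact aux_tendsto_sandwich hKlim h1 h2
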